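/- arXiv:1410.1371 — 2 statements merged into one kernel-verified Lean document; each statement's English description precedes it below -/
import Mathlib

section
/- For every positive integer k and prime power q, the digraph H_k^q is vertex-transitive: for any two vertices u and v of H_k^q there exists an automorphism of H_k^q mapping u to v. -/
/-- The standard bilinear form `⟨v,w⟩ = ∑ i, v i * w i` on `F^k`. -/
def bil {k : ℕ} {F : Type} [Field F] (v w : Fin k → F) : F := ∑ i, v i * w i

/-- A vector is *normal* if its first nonzero entry equals `1`. -/
def IsNormal {k : ℕ} {F : Type} [Field F] (v : Fin k → F) : Prop :=
  ∃ i : Fin k, v i = 1 ∧ ∀ j : Fin k, j < i → v j = 0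

/-- The vertex set `W` of the digraph `H_k^q`. -/
def IsHVertex {k : ℕ} {F : Type} [Field F] (p : (Fin k → F) × (Fin k → F)) : Prop :=
  IsNormal p.1 ∧ IsNormal p.2 ∧ bil p.1 p.2 ≠ 0

/-- The vertices of the digraph `H_k^q`. -/
abbrev HVtx (k : ℕ) (F : Type) [Field F] : Type :=
  {p : (Fin k → F) × (Fin k → F) // IsHVertex p}

/-- The (loopless) adjacency of `H_k^q`: there is an edge from the vertex `(v,w)` to a
distinct vertex `(v',w')` iff `⟨v,w'⟩ ≠ 0`. -/
def HAdj {k : ℕ} {F : Type} [Field F] (a b : HVtx k F) : Prop :=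
  a ≠ b ∧ bil a.val.1 b.val.2 ≠ 0

/-- The directional complement of a loopless digraph: for distinct vertices `a, b`,
`(a,b)` is an edge iff it is not an edge of the original digraph. -/
def digraphCompl {V : Type*} (G : V → V → Prop) : V → V → Prop :=
  fun a b => a ≠ b ∧ ¬ G a b

/-- Option-valued search for the first index satisfying a predicate. -/
def Fin.findO {n : ℕ} (p : Fin n → Prop) [DecidablePred p] : Option (Fin n) :=
  if h : ∃ i, p i then some (Fin.find p h) else none

lemma Fin.findO_eq_some_iff {n : ℕ} {p : Fin n → Prop} [DecidablePred p] {i : Fin n} :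
    Fin.findO p = some i ↔ p i ∧ ∀ j, p j → i ≤ j := by
  unfold Fin.findO
  split_ifs with h
  · rw [Option.some_inj, Fin.find_eq_iff]
    constructor
    · rintro ⟨hi, hmin⟩
      exact ⟨hi, fun j hj => not_lt.1 fun hlt => hmin j hlt hj⟩
    · rintro ⟨hi, hmin⟩
      exact ⟨hi, fun j hj hpj => absurd (hmin j hpj) (not_le.2 hj)⟩
  · constructor
    · intro h'; cases h'
    · rintro ⟨hi, -⟩; exact absurd ⟨i, hi⟩ h

lemma Fin.findO_eq_none_iff {n : ℕ} {p : Fin n → Prop} [DecidablePred p] :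
    Fin.findO p = none ↔ ∀ i, ¬ p i := by
  unfold Fin.findO
  split_ifs with h
  · constructor
    · intro h'; cases h'
    · intro h'; obtain ⟨i, hi⟩ := h; exact absurd hi (h' i)
  · push_neg at h; exact ⟨fun _ => h, fun _ => rfl⟩

lemma Fin.isSome_findO_iff {n : ℕ} {p : Fin n → Prop} [DecidablePred p] :
    (Fin.findO p).isSome ↔ ∃ i, p i := by
  unfold Fin.findO
  split_ifs with h
  · exact ⟨fun _ => h, fun _ => rfl⟩
  · exact ⟨fun h' => by simp at h', fun h' => absurd h' h⟩

open Classical in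
/-- Normalization: scale a vector so that its first nonzero entry is 1. -/
noncomputable def nrm {k : ℕ} {F : Type} [Field F] (x : Fin k → F) : Fin k → F :=
  match Fin.findO (fun i => x i ≠ 0) with
  | some i => (x i)⁻¹ • x
  | none => x

section Lemmas

variable {k : ℕ} {F : Type} [Field F]

lemma bil_comm (v w : Fin k → F) : bil v w = bil w v := by
  simp [bil, mul_comm]

lemma bil_smul_left (c : F) (v w : Fin k → F) : bil (c • v) w = c * bil v w := by
  simp [bil, Finset.mul_sum, mul_assoc]

lemma bil_smul_right (c : F) (v w : Fin k → F) : bil v (c • w) = c * bil v w := by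
  rw [bil_comm, bil_smul_left, bil_comm]

lemma bil_single (i : Fin k) (a : Fin k → F) : bil (Pi.single i 1) a = a i := by
  classical
  simp [bil, Pi.single_apply, ite_mul]

lemma bil_right_cancel {a b : Fin k → F} (h : ∀ z, bil z a = bil z b) : a = b := by
  funext i
  have := h (Pi.single i 1)
  simpa [bil_single] using this

/-- The bilinear form as a bilinear map. -/
noncomputable def bilL : (Fin k → F) →ₗ[F] (Fin k → F) →ₗ[F] F :=
  LinearMap.mk₂ F bil
    (fun a b w => by simp [bil, add_mul, Finset.sum_add_distrib])
    (fun c a w => bil_smul_left c a w)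
    (fun v a b => by simp [bil, mul_add, Finset.sum_add_distrib])
    (fun c v w => bil_smul_right c v w)

@[simp] lemma bilL_apply (v w : Fin k → F) : bilL v w = bil v w := rfl

lemma IsNormal.ne_zero {x : Fin k → F} (h : IsNormal x) : x ≠ 0 := by
  obtain ⟨i, hi, -⟩ := h
  intro hx
  rw [hx] at hi
  simp at hi

open Classical in
lemma nrm_of_isNormal {x : Fin k → F} (h : IsNormal x) : nrm x = x := by
  obtain ⟨i, hi, hlt⟩ := h
  have hfind : Fin.findO (fun j => x j ≠ 0) = some i := by
    rw [Fin.findO_eq_some_iff]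
    refine ⟨by rw [hi]; exact one_ne_zero, fun j hj => ?_⟩
    by_contra hij
    exact hj (hlt j (lt_of_not_ge hij))
  simp only [nrm]
  rw [hfind]
  simp [hi]

open Classical in
lemma nrm_spec {x : Fin k → F} (hx : x ≠ 0) :
    ∃ c : F, c ≠ 0 ∧ nrm x = c • x ∧ IsNormal (nrm x) := by
  have hex : ∃ i, x i ≠ 0 := by
    by_contra h
    push_neg at h
    exact hx (funext fun i => h i)
  have hsome : (Fin.findO (fun i => x i ≠ 0)).isSome := Fin.isSome_findO_iff.2 hex
  obtain ⟨i, hfind⟩ := Option.isSome_iff_exists.1 hsome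
  obtain ⟨hxi, hmin⟩ := Fin.findO_eq_some_iff.1 hfind
  refine ⟨(x i)⁻¹, inv_ne_zero hxi, ?_, ?_⟩
  · simp only [nrm]; rw [hfind]
  · simp only [nrm]; rw [hfind]
    refine ⟨i, by simp [inv_mul_cancel₀ hxi], fun j hj => ?_⟩
    have : x j = 0 := by
      by_contra hxj
      exact absurd (hmin j hxj) (not_le.2 hj)
    simp [this]

open Classical in
lemma nrm_smul {c : F} (hc : c ≠ 0) (x : Fin k → F) : nrm (c • x) = nrm x := by
  have hiff : ∀ i, (c • x) i ≠ 0 ↔ x i ≠ 0 := by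
    intro i; simp [smul_eq_mul, hc]
  have hfind : Fin.findO (fun i => (c • x) i ≠ 0) = Fin.findO (fun i => x i ≠ 0) := by
    rcases hh : Fin.findO (fun i => x i ≠ 0) with _ | i
    · rw [Fin.findO_eq_none_iff] at hh ⊢
      intro i; rw [hiff]; exact hh i
    · rw [Fin.findO_eq_some_iff] at hh ⊢
      exact ⟨(hiff i).2 hh.1, fun j hj => hh.2 j ((hiff j).1 hj)⟩
  simp only [nrm]
  rw [hfind]
  rcases hh : Fin.findO (fun i => x i ≠ 0) with _ | i
  · rw [Fin.findO_eq_none_iff] at hh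
    have : x = 0 := funext fun i => by_contra fun h => hh i h
    simp [this]
  · have hxi : x i ≠ 0 := (Fin.findO_eq_some_iff.1 hh).1
    simp only [Pi.smul_apply, smul_eq_mul, mul_inv_rev, smul_smul]
    rw [mul_assoc, inv_mul_cancel₀ hc, mul_one]

lemma nrm_smul_normal {c : F} (hc : c ≠ 0) {x : Fin k → F} (hx : IsNormal x) :
    nrm (c • x) = x := by rw [nrm_smul hc, nrm_of_isNormal hx]

/-- The vertex map associated to a pair of linear equivalences compatible with `bil`. -/
noncomputable def vmap (e f : (Fin k → F) ≃ₗ[F] (Fin k → F))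
    (hef : ∀ x y, bil (e x) (f y) = bil x y) (p : HVtx k F) : HVtx k F := by
  refine ⟨(nrm (e p.val.1), nrm (f p.val.2)), ?_⟩
  obtain ⟨h1, h2, h3⟩ := p.property
  have he1 : e p.val.1 ≠ 0 := fun h => h1.ne_zero (by simpa using e.map_eq_zero_iff.1 h)
  have hf2 : f p.val.2 ≠ 0 := fun h => h2.ne_zero (by simpa using f.map_eq_zero_iff.1 h)
  obtain ⟨c1, hc1, hn1, hN1⟩ := nrm_spec he1
  obtain ⟨c2, hc2, hn2, hN2⟩ := nrm_spec hf2
  refine ⟨hN1, hN2, ?_⟩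
  rw [hn1, hn2, bil_smul_left, bil_smul_right, hef]
  exact mul_ne_zero hc1 (mul_ne_zero hc2 h3)

lemma vmap_bil (e f : (Fin k → F) ≃ₗ[F] (Fin k → F))
    (hef : ∀ x y, bil (e x) (f y) = bil x y) (p q : HVtx k F) :
    bil ((vmap e f hef p).val.1) ((vmap e f hef q).val.2) ≠ 0 ↔
      bil p.val.1 q.val.2 ≠ 0 := by
  have he1 : e p.val.1 ≠ 0 := fun h =>
    p.property.1.ne_zero (by simpa using e.map_eq_zero_iff.1 h)
  have hf2 : f q.val.2 ≠ 0 := fun h =>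
    q.property.2.1.ne_zero (by simpa using f.map_eq_zero_iff.1 h)
  obtain ⟨c1, hc1, hn1, -⟩ := nrm_spec he1
  obtain ⟨c2, hc2, hn2, -⟩ := nrm_spec hf2
  show bil (nrm (e p.val.1)) (nrm (f q.val.2)) ≠ 0 ↔ _
  rw [hn1, hn2, bil_smul_left, bil_smul_right, hef]
  simp [hc1, hc2]

lemma vmap_vmap (e f : (Fin k → F) ≃ₗ[F] (Fin k → F))
    (hef : ∀ x y, bil (e x) (f y) = bil x y)
    (hef' : ∀ x y, bil (e.symm x) (f.symm y) = bil x y) (p : HVtx k F) :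
    vmap e.symm f.symm hef' (vmap e f hef p) = p := by
  obtain ⟨h1, h2, h3⟩ := p.property
  have he1 : e p.val.1 ≠ 0 := fun h => h1.ne_zero (by simpa using e.map_eq_zero_iff.1 h)
  have hf2 : f p.val.2 ≠ 0 := fun h => h2.ne_zero (by simpa using f.map_eq_zero_iff.1 h)
  obtain ⟨c1, hc1, hn1, -⟩ := nrm_spec he1
  obtain ⟨c2, hc2, hn2, -⟩ := nrm_spec hf2
  apply Subtype.ext
  apply Prod.ext
  · show nrm (e.symm (nrm (e p.val.1))) = p.val.1
    rw [hn1, map_smul, e.symm_apply_apply, nrm_smul_normal hc1 h1]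
  · show nrm (f.symm (nrm (f p.val.2))) = p.val.2
    rw [hn2, map_smul, f.symm_apply_apply, nrm_smul_normal hc2 h2]

/-- The automorphism of `H_k^q` associated to a compatible pair of linear equivalences. -/
noncomputable def vequiv (e f : (Fin k → F) ≃ₗ[F] (Fin k → F))
    (hef : ∀ x y, bil (e x) (f y) = bil x y) : HVtx k F ≃ HVtx k F where
  toFun := vmap e f hef
  invFun := vmap e.symm f.symm (fun x y => by
    rw [← hef (e.symm x) (f.symm y), e.apply_symm_apply, f.apply_symm_apply])
  left_inv p := vmap_vmap e f hef _ p
  right_inv p := by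
    have h := vmap_vmap e.symm f.symm
      (fun x y => by rw [← hef (e.symm x) (f.symm y), e.apply_symm_apply, f.apply_symm_apply])
      (fun x y => by simpa using hef x y) p
    simpa using h

lemma vequiv_adj (e f : (Fin k → F) ≃ₗ[F] (Fin k → F))
    (hef : ∀ x y, bil (e x) (f y) = bil x y) (x y : HVtx k F) :
    HAdj x y ↔ HAdj (vequiv e f hef x) (vequiv e f hef y) := by
  unfold HAdj
  constructor
  · rintro ⟨hne, hb⟩
    exact ⟨fun h => hne ((vequiv e f hef).injective h), (vmap_bil e f hef x y).2 hb⟩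
  · rintro ⟨hne, hb⟩
    exact ⟨fun h => hne (by rw [h]), (vmap_bil e f hef x y).1 hb⟩

end Lemmas


section Main

variable {k : ℕ} {F : Type} [Field F]

lemma vmap_val (e f : (Fin k → F) ≃ₗ[F] (Fin k → F))
    (hef : ∀ x y, bil (e x) (f y) = bil x y) (p : HVtx k F) :
    (vmap e f hef p).val = (nrm (e p.val.1), nrm (f p.val.2)) := rfl

lemma vequiv_val (e f : (Fin k → F) ≃ₗ[F] (Fin k → F))
    (hef : ∀ x y, bil (e x) (f y) = bil x y) (p : HVtx k F) :
    (vequiv e f hef p).val = (nrm (e p.val.1), nrm (f p.val.2)) := rfl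

/-- Key construction: a basis starting with `a` whose other elements are
orthogonal to `b`. -/
lemma exists_basis {k' : ℕ} (a b : Fin (k' + 1) → F) (hc : bil a b ≠ 0) :
    ∃ bb : Module.Basis (Fin (k' + 1)) F (Fin (k' + 1) → F),
      bb 0 = a ∧ ∀ i : Fin k', bil (bb i.succ) b = 0 := by
  classical
  set ψ : (Fin (k' + 1) → F) →ₗ[F] F := (bilL (k := k' + 1) (F := F)).flip b with hψ
  have hψa : ψ a = bil a b := rfl
  have hsurj : Function.Surjective ψ := by
    intro r
    refine ⟨(r * (bil a b)⁻¹) • a, ?_⟩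
    show bil ((r * (bil a b)⁻¹) • a) b = r
    rw [bil_smul_left]
    field_simp
  have hrange : LinearMap.range ψ = ⊤ := LinearMap.range_eq_top.2 hsurj
  have hdim : Module.finrank F (Fin (k' + 1) → F) = k' + 1 := by
    simp [Module.finrank_pi]
  have hrk := LinearMap.finrank_range_add_finrank_ker ψ
  rw [hrange, finrank_top, Module.finrank_self, hdim] at hrk
  have hker : Module.finrank F (LinearMap.ker ψ) = k' := by omega
  set K := LinearMap.ker ψ
  let bK : Module.Basis (Fin k') F K := Module.finBasisOfFinrankEq F K hker
  have hli : ∀ (c : F), ∀ x ∈ K, c • a + x = 0 → c = 0 := by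
    intro c x hx h
    have := congrArg ψ h
    rw [map_add, map_smul, LinearMap.mem_ker.1 hx, add_zero, map_zero, hψa,
      smul_eq_mul] at this
    exact (mul_eq_zero.1 this).resolve_right hc
  have hsp : ∀ z : Fin (k' + 1) → F, ∃ c : F, z + c • a ∈ K := by
    intro z
    refine ⟨-(ψ z) / bil a b, LinearMap.mem_ker.2 ?_⟩
    rw [map_add, map_smul, hψa, smul_eq_mul]
    field_simp
    ring
  refine ⟨Module.Basis.mkFinCons a bK hli hsp, ?_, ?_⟩
  · rw [show ((Module.Basis.mkFinCons a bK hli hsp : Module.Basis (Fin (k' + 1)) F (Fin (k' + 1) → F)) :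
      Fin (k' + 1) → (Fin (k' + 1) → F)) = Fin.cons a (K.subtype ∘ bK) from
      Module.Basis.coe_mkFinCons a bK hli hsp]
    exact Fin.cons_zero _ _
  · intro i
    rw [show ((Module.Basis.mkFinCons a bK hli hsp : Module.Basis (Fin (k' + 1)) F (Fin (k' + 1) → F)) :
      Fin (k' + 1) → (Fin (k' + 1) → F)) = Fin.cons a (K.subtype ∘ bK) from
      Module.Basis.coe_mkFinCons a bK hli hsp, Fin.cons_succ]
    exact LinearMap.mem_ker.1 (bK i).property

lemma dual_formula {k' : ℕ} (x y : Fin k' → F) :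
    (Pi.basisFun F (Fin k')).toDualEquiv x y = bil x y := by
  classical
  set sb := Pi.basisFun F (Fin k')
  have hx : x = ∑ i, x i • sb i := by
    funext j
    simp [sb, Pi.basisFun_apply, Pi.single_apply, Finset.sum_ite_eq', mul_comm]
  calc sb.toDualEquiv x y = sb.toDual x y := by rw [Module.Basis.toDualEquiv_apply]
    _ = sb.toDual (∑ i, x i • sb i) y := by rw [← hx]
    _ = ∑ i, x i * sb.toDual (sb i) y := by
        rw [map_sum]
        simp [LinearMap.sum_apply]
    _ = ∑ i, x i * y i := by
        simp only [Module.Basis.toDual_apply_right]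
        simp [sb, Pi.basisFun_repr]
    _ = bil x y := rfl

end Main

/-- For every positive integer `k` and prime power `q`, the digraph `H_k^q` is
vertex-transitive: any vertex can be mapped to any other by an automorphism. -/
theorem Hkq_vertexTransitive (q k : ℕ) (hq : IsPrimePow q) (hk : 0 < k)
    (F : Type) [Field F] [Fintype F] (hF : Fintype.card F = q) (u v : HVtx k F) :
    ∃ φ : HVtx k F ≃ HVtx k F,
      (∀ x y : HVtx k F, HAdj x y ↔ HAdj (φ x) (φ y)) ∧ φ u = v := by
  classical
  obtain ⟨k', rfl⟩ : ∃ k', k = k' + 1 := ⟨k - 1, (Nat.succ_pred_eq_of_pos hk).symm⟩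
  obtain ⟨hu1, hu2, hu3⟩ := u.property
  obtain ⟨hv1, hv2, hv3⟩ := v.property
  set a₁ := u.val.1 with ha₁
  set b₁ := u.val.2 with hb₁
  set a₂ := v.val.1 with ha₂
  set b₂ := v.val.2 with hb₂
  set c := bil a₁ b₁ with hc
  set c' := bil a₂ b₂ with hc'
  obtain ⟨bb, hbb0, hbbs⟩ := exists_basis a₁ b₁ hu3
  obtain ⟨bb', hbb0', hbbs'⟩ := exists_basis a₂ b₂ hv3
  set e : (Fin (k' + 1) → F) ≃ₗ[F] (Fin (k' + 1) → F) := bb.equiv bb' (Equiv.refl _) with he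
  have heb : ∀ i, e (bb i) = bb' i := fun i => by
    rw [he, Module.Basis.equiv_apply]; rfl
  have hea : e a₁ = a₂ := by rw [← hbb0, ← hbb0']; exact heb 0
  -- the key linear identity
  have hL : ∀ x, bil (e x) b₂ = (c' / c) * bil x b₁ := by
    have hmap : (bilL.flip b₂).comp e.toLinearMap = (c' / c) • bilL.flip b₁ := by
      apply Module.Basis.ext bb
      intro i
      induction i using Fin.cases with
      | zero =>
        simp only [LinearMap.comp_apply, LinearEquiv.coe_coe, LinearMap.smul_apply,
          smul_eq_mul]
        rw [hbb0, hea]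
        show bil a₂ b₂ = (c' / c) * bil a₁ b₁
        rw [← hc, ← hc', div_mul_cancel₀ _ hu3]
      | succ j =>
        simp only [LinearMap.comp_apply, LinearEquiv.coe_coe, LinearMap.smul_apply,
          smul_eq_mul]
        rw [heb]
        show bil (bb' j.succ) b₂ = (c' / c) * bil (bb j.succ) b₁
        rw [hbbs' j, hbbs j, mul_zero]
    intro x
    have := LinearMap.ext_iff.1 hmap x
    simpa using this
  -- the adjoint equivalence
  set D := (Pi.basisFun F (Fin (k' + 1))).toDualEquiv with hD
  set f : (Fin (k' + 1) → F) ≃ₗ[F] (Fin (k' + 1) → F) :=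
    D.trans ((e.symm.dualMap).trans D.symm) with hf
  have hfval : ∀ y, f y = D.symm (e.symm.dualMap (D y)) := fun y => rfl
  have hef : ∀ x y, bil (e x) (f y) = bil x y := by
    intro x y
    rw [bil_comm, ← dual_formula, ← hD, hfval, D.apply_symm_apply,
      LinearEquiv.dualMap_apply, e.symm_apply_apply, dual_formula, bil_comm]
  -- compute f b₁
  have hfb : f b₁ = (c / c') • b₂ := by
    apply bil_right_cancel
    intro z
    obtain ⟨x, rfl⟩ := e.surjective z
    have hcc : c / c' * (c' / c) = 1 := by
      field_simp
    rw [hef, bil_smul_right, hL, ← mul_assoc, hcc, one_mul]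
  refine ⟨vequiv e f hef, vequiv_adj e f hef, ?_⟩
  apply Subtype.ext
  rw [vequiv_val]
  apply Prod.ext
  · show nrm (e a₁) = a₂
    rw [hea, nrm_of_isNormal hv1]
  · show nrm (f b₁) = b₂
    rw [hfb, nrm_smul_normal (div_ne_zero hu3 hv3) hv2]
end

section
/- Let q be a prime power, k a positive integer, G a finite loopless digraph, and K a finite digraph. If |G| / N(Ḡ, K) > |H_k^q| / N(H̄_k^q, K), then minrank_q(G) ≥ k + 1, where H̄_k^q denotes the directional complement of H_k^q and |G| the number of vertices of G. -/
/-- `minrank F G` of a loopless digraph `G` on `{1,…,n}` over a field `F`: the minimum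
rank of an `n × n` matrix `M` over `F` with `M i i ≠ 0` for all `i` and `M i j = 0`
whenever `i ≠ j` and `(i,j)` is not an edge of `G`. -/
noncomputable def minrank {n : ℕ} (F : Type) [Field F] (G : Fin n → Fin n → Prop) : ℕ :=
  sInf {r | ∃ M : Matrix (Fin n) (Fin n) F, (∀ i, M i i ≠ 0) ∧
    (∀ i j, i ≠ j → ¬ G i j → M i j = 0) ∧ M.rank = r}

/-- `Nhom L K` is the maximum number of vertices of an induced subdigraph `L'` of `L`
(given by a subset `S` of the vertices of `L` with the restricted adjacency) such that
there exists a homomorphism from `L'` to `K`. -/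
noncomputable def Nhom {VL VK : Type*} (L : VL → VL → Prop) (K : VK → VK → Prop) : ℕ :=
  sSup {n | ∃ S : Set VL,
    (∃ f : S → VK, ∀ x y : S, L x.val y.val → K (f x) (f y)) ∧ Nat.card S = n}

open Matrix

namespace MR
set_option linter.dupNamespace false
set_option linter.unnecessarySimpa false
open Classical

variable {k : ℕ} {F : Type} [Field F]

lemma bil_eq_dot (v w : Fin k → F) : bil v w = v ⬝ᵥ w := rfl

lemma bil_smul_left (c : F) (v w : Fin k → F) : bil (c • v) w = c * bil v w := by
  rw [bil_eq_dot, bil_eq_dot, smul_dotProduct, smul_eq_mul]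

lemma bil_smul_right (c : F) (v w : Fin k → F) : bil v (c • w) = c * bil v w := by
  rw [bil_eq_dot, bil_eq_dot, dotProduct_smul, smul_eq_mul]

lemma bil_comm (v w : Fin k → F) : bil v w = bil w v := by
  rw [bil_eq_dot, bil_eq_dot, dotProduct_comm]

lemma bil_zero_left (w : Fin k → F) : bil 0 w = 0 := by
  rw [bil_eq_dot, zero_dotProduct]

noncomputable def ldx (v : Fin k → F) (h : v ≠ 0) : Fin k :=
  (Finset.univ.filter fun i => v i ≠ 0).min' (by
    obtain ⟨i, hi⟩ := Function.ne_iff.mp h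
    exact ⟨i, by simpa using hi⟩)

lemma ldx_spec (v : Fin k → F) (h : v ≠ 0) : v (ldx v h) ≠ 0 := by
  have hne : (Finset.univ.filter fun i => v i ≠ 0).Nonempty := by
    obtain ⟨i, hi⟩ := Function.ne_iff.mp h
    exact ⟨i, by simpa using hi⟩
  unfold ldx
  exact (Finset.mem_filter.mp (Finset.min'_mem _ hne)).2

lemma ldx_lt (v : Fin k → F) (h : v ≠ 0) {j : Fin k} (hj : j < ldx v h) : v j = 0 := by
  by_contra hne
  have hmem : j ∈ Finset.univ.filter fun i => v i ≠ 0 := by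
    simp only [Finset.mem_filter, Finset.mem_univ, true_and]; exact hne
  revert hj
  unfold ldx
  exact fun hj => absurd (Finset.min'_le _ _ hmem) (not_le.mpr hj)

lemma ldx_eq (v : Fin k → F) (h : v ≠ 0) {i : Fin k} (hi : v i ≠ 0)
    (hlt : ∀ j : Fin k, j < i → v j = 0) : ldx v h = i := by
  rcases lt_trichotomy (ldx v h) i with hc | hc | hc
  · exact absurd (hlt _ hc) (ldx_spec v h)
  · exact hc
  · exact absurd (ldx_lt v h hc) hi

noncomputable def nrm (v : Fin k → F) : Fin k → F :=
  if h : v = 0 then 0 else (v (ldx v h))⁻¹ • v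

lemma nrm_eq_smul (v : Fin k → F) (h : v ≠ 0) :
    ∃ c : F, c ≠ 0 ∧ nrm v = c • v := by
  refine ⟨(v (ldx v h))⁻¹, inv_ne_zero (ldx_spec v h), ?_⟩
  unfold nrm; rw [dif_neg h]

lemma nrm_isNormal (v : Fin k → F) (h : v ≠ 0) : IsNormal (nrm v) := by
  refine ⟨ldx v h, ?_, ?_⟩
  · unfold nrm; rw [dif_neg h]
    simp [inv_mul_cancel₀ (ldx_spec v h)]
  · intro j hj
    unfold nrm; rw [dif_neg h]
    simp [ldx_lt v h hj]

lemma _root_.IsNormal.ne_zero_s11 {v : Fin k → F} (h : IsNormal v) : v ≠ 0 := by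
  obtain ⟨i, h1, _⟩ := h
  intro h0
  rw [h0] at h1
  simpa using h1

lemma nrm_of_isNormal {v : Fin k → F} (h : IsNormal v) : nrm v = v := by
  obtain ⟨i, h1, hlt⟩ := h
  have hv : v ≠ 0 := IsNormal.ne_zero_s11 ⟨i, h1, hlt⟩
  have : ldx v hv = i := ldx_eq v hv (by rw [h1]; exact one_ne_zero) hlt
  unfold nrm; rw [dif_neg hv, this, h1]
  simp

lemma nrm_smul (c : F) (hc : c ≠ 0) (v : Fin k → F) : nrm (c • v) = nrm v := by
  by_cases h : v = 0
  · rw [h, smul_zero]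
  · have hcv : c • v ≠ 0 := smul_ne_zero hc h
    have hl : ldx (c • v) hcv = ldx v h := by
      refine ldx_eq _ _ ?_ ?_
      · simp [mul_ne_zero hc (ldx_spec v h)]
      · intro j hj; simp [ldx_lt v h hj]
    unfold nrm; rw [dif_neg hcv, dif_neg h, hl]
    rw [smul_smul]
    congr 1
    simp only [Pi.smul_apply, smul_eq_mul]
    rw [mul_inv, mul_comm (c⁻¹) _, mul_assoc, inv_mul_cancel₀ hc, mul_one]
abbrev GLk (k : ℕ) (F : Type) [Field F] := (Matrix (Fin k) (Fin k) F)ˣ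

lemma mulVec_ne_zero (A : GLk k F) {v : Fin k → F} (hv : v ≠ 0) : A.val *ᵥ v ≠ 0 := by
  intro h0
  apply hv
  have h : A⁻¹.val *ᵥ (A.val *ᵥ v) = v := by
    rw [mulVec_mulVec, Units.inv_mul, one_mulVec]
  rw [h0, mulVec_zero] at h
  exact h.symm

lemma vecMul_ne_zero (A : GLk k F) {w : Fin k → F} (hw : w ≠ 0) : w ᵥ* A.val ≠ 0 := by
  intro h0
  apply hw
  have h : (w ᵥ* A.val) ᵥ* A⁻¹.val = w := by
    rw [vecMul_vecMul, Units.mul_inv, vecMul_one]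
  rw [h0, zero_vecMul] at h
  exact h.symm

lemma glBil (A : GLk k F) (v w : Fin k → F) :
    bil (A.val *ᵥ v) (w ᵥ* A⁻¹.val) = bil v w := by
  rw [bil_eq_dot, bil_eq_dot, dotProduct_comm, dotProduct_mulVec, vecMul_vecMul,
    Units.inv_mul, vecMul_one, dotProduct_comm]

noncomputable instance : SMul (GLk k F) (HVtx k F) where
  smul A x := ⟨(nrm (A.val *ᵥ x.val.1), nrm (x.val.2 ᵥ* A⁻¹.val)), by
    obtain ⟨h1, h2, h3⟩ := x.2
    have hv : A.val *ᵥ x.val.1 ≠ 0 := mulVec_ne_zero A h1.ne_zero_s11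
    have hw : x.val.2 ᵥ* A⁻¹.val ≠ 0 := vecMul_ne_zero A⁻¹ h2.ne_zero_s11
    obtain ⟨c, hc, hceq⟩ := nrm_eq_smul _ hv
    obtain ⟨d, hd, hdeq⟩ := nrm_eq_smul _ hw
    refine ⟨nrm_isNormal _ hv, nrm_isNormal _ hw, ?_⟩
    rw [hceq, hdeq, bil_smul_left, bil_smul_right, glBil]
    exact mul_ne_zero hc (mul_ne_zero hd h3)⟩

lemma glSmul_fst (A : GLk k F) (x : HVtx k F) :
    (A • x).val.1 = nrm (A.val *ᵥ x.val.1) := rfl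

lemma glSmul_snd (A : GLk k F) (x : HVtx k F) :
    (A • x).val.2 = nrm (x.val.2 ᵥ* A⁻¹.val) := rfl

noncomputable instance : MulAction (GLk k F) (HVtx k F) where
  one_smul x := by
    apply Subtype.ext
    apply Prod.ext
    · rw [glSmul_fst, Units.val_one, one_mulVec, nrm_of_isNormal x.2.1]
    · rw [glSmul_snd, inv_one, Units.val_one, vecMul_one, nrm_of_isNormal x.2.2.1]
  mul_smul A B x := by
    obtain ⟨h1, h2, h3⟩ := x.2
    apply Subtype.ext
    apply Prod.ext
    · rw [glSmul_fst, glSmul_fst, glSmul_fst]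
      obtain ⟨c, hc, hceq⟩ := nrm_eq_smul _ (mulVec_ne_zero B h1.ne_zero_s11)
      rw [hceq, mulVec_smul, nrm_smul c hc, mulVec_mulVec, Units.val_mul]
    · rw [glSmul_snd, glSmul_snd, glSmul_snd]
      obtain ⟨c, hc, hceq⟩ := nrm_eq_smul _ (vecMul_ne_zero B⁻¹ h2.ne_zero_s11)
      rw [hceq, smul_vecMul, nrm_smul c hc, vecMul_vecMul, _root_.mul_inv_rev, Units.val_mul]

lemma bil_smul_ne_iff (A : GLk k F) (x y : HVtx k F) :
    bil ((A • x).val.1) ((A • y).val.2) ≠ 0 ↔ bil x.val.1 y.val.2 ≠ 0 := by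
  rw [glSmul_fst, glSmul_snd]
  obtain ⟨c, hc, hceq⟩ := nrm_eq_smul _ (mulVec_ne_zero A x.2.1.ne_zero_s11)
  obtain ⟨d, hd, hdeq⟩ := nrm_eq_smul _ (vecMul_ne_zero A⁻¹ y.2.2.1.ne_zero_s11)
  rw [hceq, hdeq, bil_smul_left, bil_smul_right, glBil, mul_ne_zero_iff, mul_ne_zero_iff]
  tauto

lemma hadj_smul (A : GLk k F) (x y : HVtx k F) : HAdj (A • x) (A • y) ↔ HAdj x y := by
  unfold HAdj
  apply and_congr
  · constructor
    · exact fun h e => h (by rw [e])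
    · exact fun h e => h (smul_left_cancel A e)
  · exact bil_smul_ne_iff A x y

lemma dcompl_smul (A : GLk k F) {x y : HVtx k F} (h : digraphCompl HAdj x y) :
    digraphCompl HAdj (A • x) (A • y) :=
  ⟨fun e => h.1 (smul_left_cancel A e), fun ha => h.2 ((hadj_smul A x y).mp ha)⟩



noncomputable def bilF (w : Fin k → F) : (Fin k → F) →ₗ[F] F where
  toFun z := bil z w
  map_add' a b := by
    show bil (a + b) w = bil a w + bil b w
    rw [bil_eq_dot, bil_eq_dot, bil_eq_dot, add_dotProduct]
  map_smul' c a := by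
    show bil (c • a) w = (RingHom.id F) c • bil a w
    rw [bil_smul_left, RingHom.id_apply, smul_eq_mul]

lemma isNormal_single (hk : 0 < k) : IsNormal (Pi.single (⟨0, hk⟩ : Fin k) (1 : F)) := by
  refine ⟨⟨0, hk⟩, by simp, ?_⟩
  intro j hj
  exact absurd hj (by simp [Fin.lt_def])

lemma eIsHVertex (hk : 0 < k) :
    IsHVertex ((Pi.single (⟨0, hk⟩ : Fin k) (1 : F), Pi.single (⟨0, hk⟩ : Fin k) (1 : F))) := by
  refine ⟨isNormal_single hk, isNormal_single hk, ?_⟩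
  show bil (Pi.single ⟨0, hk⟩ 1) (Pi.single ⟨0, hk⟩ 1) ≠ 0
  rw [bil_eq_dot, dotProduct_single, Pi.single_eq_same, mul_one]
  exact one_ne_zero

noncomputable def eHV (hk : 0 < k) : HVtx k F :=
  ⟨(Pi.single ⟨0, hk⟩ 1, Pi.single ⟨0, hk⟩ 1), eIsHVertex hk⟩

lemma exists_smul_e (hk : 0 < k) (x : HVtx k F) :
    ∃ A : GLk k F, A • (eHV hk) = x := by
  obtain ⟨hv, hw, hc⟩ := x.2
  set v := x.val.1 with hvdef
  set w := x.val.2 with hwdef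
  set c := bil v w with hcdef
  set f := bilF (k := k) w with hf
  have hfapp : ∀ z, f z = bil z w := fun z => rfl
  have hrange : LinearMap.range f = ⊤ := by
    rw [LinearMap.range_eq_top]
    intro a
    refine ⟨(a * c⁻¹) • v, ?_⟩
    rw [hfapp, bil_smul_left, ← hcdef, mul_assoc, inv_mul_cancel₀ hc, mul_one]
  have hdim : Module.finrank F (LinearMap.ker f) = k - 1 := by
    have h1 := LinearMap.finrank_range_add_finrank_ker f
    rw [hrange, finrank_top, Module.finrank_self, Module.finrank_fin_fun] at h1
    omega
  set bN : Module.Basis (Fin (k - 1)) F (LinearMap.ker f) := Module.finBasisOfFinrankEq F (LinearMap.ker f) hdim with hbN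
  have hli : ∀ (a : F), ∀ z ∈ LinearMap.ker f, a • v + z = 0 → a = 0 := by
    intro a z hz h0
    have h2 := congrArg f h0
    rw [map_add, _root_.map_smul, LinearMap.mem_ker.mp hz, add_zero, map_zero, smul_eq_mul,
      hfapp, ← hcdef] at h2
    exact (mul_eq_zero.mp h2).resolve_right hc
  have hsp : ∀ z, ∃ a : F, z + a • v ∈ LinearMap.ker f := by
    intro z
    refine ⟨-(f z) * c⁻¹, ?_⟩
    rw [LinearMap.mem_ker, map_add, _root_.map_smul, smul_eq_mul, hfapp v, ← hcdef,
      mul_assoc, inv_mul_cancel₀ hc, mul_one]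
    ring
  have hk1 : k - 1 + 1 = k := by omega
  set B : Module.Basis (Fin k) F (Fin k → F) :=
    (Module.Basis.mkFinCons v bN hli hsp).reindex (finCongr hk1) with hB
  have hB0 : B ⟨0, hk⟩ = v := by
    rw [hB, Module.Basis.reindex_apply, Module.Basis.coe_mkFinCons]
    have h0 : (finCongr hk1).symm ⟨0, hk⟩ = (0 : Fin (k - 1 + 1)) := by
      ext; simp
    rw [h0, Fin.cons_zero]
  have hBj : ∀ j : Fin k, j ≠ ⟨0, hk⟩ → bil (B j) w = 0 := by
    intro j hj
    rw [hB, Module.Basis.reindex_apply, Module.Basis.coe_mkFinCons]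
    set j' := (finCongr hk1).symm j with hj'def
    have hj' : j' ≠ 0 := by
      intro h0
      apply hj
      have : j = finCongr (Nat.succ_pred_eq_of_pos hk) j' := by simp [hj'def]
      rw [this, h0]
      ext
      simp
    obtain ⟨j'', hj''⟩ := Fin.exists_succ_eq.mpr hj'
    rw [← hj'', Fin.cons_succ]
    exact LinearMap.mem_ker.mp (bN j'').2
  set C : Matrix (Fin k) (Fin k) F := (Pi.basisFun F (Fin k)).toMatrix B with hC
  haveI hCinv : Invertible C := (Pi.basisFun F (Fin k)).invertibleToMatrix B
  set A : GLk k F := unitOfInvertible C with hA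
  have hCapp : ∀ i j, C i j = B j i := by
    intro i j
    rw [hC, Module.Basis.toMatrix_apply, Pi.basisFun_repr]
  have hCe : C *ᵥ Pi.single ⟨0, hk⟩ 1 = v := by
    rw [mulVec_single_one]
    funext i
    show C i ⟨0, hk⟩ = v i
    rw [hCapp, hB0]
  have hwC : w ᵥ* C = c • (Pi.single (⟨0, hk⟩ : Fin k) (1 : F) : Fin k → F) := by
    funext j
    have hl : (w ᵥ* C) j = bil (B j) w := by
      rw [bil_comm]
      simp only [Matrix.vecMul, dotProduct, hCapp]
      rfl
    by_cases hj : j = ⟨0, hk⟩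
    · subst hj
      rw [hl, hB0, ← hcdef, Pi.smul_apply, Pi.single_eq_same, smul_eq_mul, mul_one]
    · rw [hl, hBj j hj, Pi.smul_apply, Pi.single_eq_of_ne hj, smul_eq_mul, mul_zero]
  refine ⟨A, ?_⟩
  apply Subtype.ext
  apply Prod.ext
  · show nrm (A.val *ᵥ Pi.single ⟨0, hk⟩ 1) = v
    have hAval : A.val = C := rfl
    rw [hAval, hCe, nrm_of_isNormal hv]
  · show nrm (Pi.single ⟨0, hk⟩ 1 ᵥ* A⁻¹.val) = w
    have hAinv : A⁻¹.val = ⅟C := rfl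
    have he : Pi.single (⟨0, hk⟩ : Fin k) (1 : F) = c⁻¹ • (w ᵥ* C) := by
      rw [hwC, smul_smul, inv_mul_cancel₀ hc, one_smul]
    rw [hAinv, he, smul_vecMul, vecMul_vecMul, mul_invOf_self, vecMul_one,
      nrm_smul _ (inv_ne_zero hc), nrm_of_isNormal hw]

lemma pretrans : MulAction.IsPretransitive (GLk k F) (HVtx k F) := by
  constructor
  intro x y
  have hk : 0 < k := by
    obtain ⟨i, -, -⟩ := x.2.1
    exact i.pos
  obtain ⟨Ax, hAx⟩ := exists_smul_e hk x
  obtain ⟨Ay, hAy⟩ := exists_smul_e hk y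
  refine ⟨Ay * Ax⁻¹, ?_⟩
  have h1 : Ax⁻¹ • x = eHV hk := inv_smul_eq_iff.mpr hAx.symm
  rw [mul_smul, h1, hAy]

set_option linter.unusedSectionVars false

section Counting

open MulAction Pointwise

variable {Γ X : Type*} [Group Γ] [Finite Γ] [MulAction Γ X] [Finite X]

lemma fiber_card [MulAction.IsPretransitive Γ X] (y s : X) :
    Nat.card {A : Γ // A • y = s} = Nat.card (stabilizer Γ y) := by
  obtain ⟨A₀, hA₀⟩ := MulAction.exists_smul_eq Γ y s
  apply Nat.card_congr
  refine ⟨fun A => ⟨A₀⁻¹ * A.val, ?_⟩, fun B => ⟨A₀ * B.val, ?_⟩, ?_, ?_⟩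
  · rw [MulAction.mem_stabilizer_iff, mul_smul, A.2, ← hA₀, inv_smul_smul]
  · rw [mul_smul, B.2.out, hA₀]
  · intro A
    apply Subtype.ext
    simp
  · intro B
    apply Subtype.ext
    simp

lemma stab_card [MulAction.IsPretransitive Γ X] (y : X) :
    Nat.card (stabilizer Γ y) * Nat.card X = Nat.card Γ := by
  classical
  haveI : Fintype Γ := Fintype.ofFinite Γ
  haveI : Fintype X := Fintype.ofFinite X
  haveI : Fintype (orbit Γ y) := Fintype.ofFinite _
  haveI : Fintype (stabilizer Γ y) := Fintype.ofFinite _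
  have h := MulAction.card_orbit_mul_card_stabilizer_eq_card_group Γ y
  rw [← Nat.card_eq_fintype_card, ← Nat.card_eq_fintype_card, ← Nat.card_eq_fintype_card] at h
  have horb : Nat.card (orbit Γ y) = Nat.card X := by
    rw [MulAction.orbit_eq_univ]
    exact Nat.card_congr (Equiv.Set.univ X)
  rw [horb] at h
  rw [mul_comm]
  exact h

lemma smulset_card [MulAction.IsPretransitive Γ X] (S : Set X) (y : X) :
    Nat.card {A : Γ // A • y ∈ S} * Nat.card X = Nat.card S * Nat.card Γ := by
  classical
  haveI : Fintype X := Fintype.ofFinite X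
  have he : {A : Γ // A • y ∈ S} ≃ (Σ s : S, {A : Γ // A • y = s.val}) :=
    { toFun := fun A => ⟨⟨A.val • y, A.2⟩, A.val, rfl⟩
      invFun := fun p => ⟨p.2.val, by rw [p.2.2]; exact p.1.2⟩
      left_inv := fun A => rfl
      right_inv := by
        rintro ⟨⟨s, hs⟩, ⟨A, hA⟩⟩
        have hA' : A • y = s := hA
        subst hA'
        rfl }
  haveI : Fintype S := Fintype.ofFinite S
  haveI : ∀ s : S, Fintype {A : Γ // A • y = s.val} := fun s => Fintype.ofFinite _
  haveI : Fintype {A : Γ // A • y ∈ S} := Fintype.ofFinite _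
  have h1 : Nat.card {A : Γ // A • y ∈ S} = ∑ s : S, Nat.card {A : Γ // A • y = s.val} := by
    rw [Nat.card_congr he, Nat.card_eq_fintype_card]
    rw [Fintype.card_sigma]
    congr 1
    funext s
    rw [Nat.card_eq_fintype_card]
  rw [h1]
  have h2 : ∀ s : S, Nat.card {A : Γ // A • y = s.val} = Nat.card (stabilizer Γ y) :=
    fun s => fiber_card y s.val
  rw [Finset.sum_congr rfl (fun s _ => h2 s), Finset.sum_const, Finset.card_univ, smul_eq_mul]
  rw [← Nat.card_eq_fintype_card (α := S), mul_assoc, stab_card y]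

lemma inv_count (S : Set X) (y : X) :
    Nat.card {A : Γ // y ∈ A • S} = Nat.card {A : Γ // A • y ∈ S} := by
  have h : ∀ A : Γ, y ∈ A • S ↔ A⁻¹ • y ∈ S := fun A => Set.mem_smul_set_iff_inv_smul_mem
  apply Nat.card_congr
  refine ⟨fun A => ⟨A.val⁻¹, (h A.val).mp A.2⟩, fun B => ⟨B.val⁻¹, ?_⟩, ?_, ?_⟩
  · rw [h]
    rw [inv_inv]
    exact B.2
  · intro A; apply Subtype.ext; simp
  · intro B; apply Subtype.ext; simp

lemma exists_good_translate {I : Type*} [Finite I] [MulAction.IsPretransitive Γ X]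
    [Nonempty Γ] (S : Set X) (φ : I → X) :
    ∃ A : Γ, Nat.card I * Nat.card S ≤ Nat.card {i : I // φ i ∈ A • S} * Nat.card X := by
  classical
  haveI : Fintype I := Fintype.ofFinite I
  haveI : Fintype Γ := Fintype.ofFinite Γ
  by_contra hcon
  push_neg at hcon
  have hsum : ∑ A : Γ, Nat.card {i : I // φ i ∈ A • S} * Nat.card X
      = Nat.card I * Nat.card S * Nat.card Γ := by
    have hswap : ∑ A : Γ, Nat.card {i : I // φ i ∈ A • S}
        = ∑ i : I, Nat.card {A : Γ // φ i ∈ A • S} := by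
      have hl : ∀ A : Γ, Nat.card {i : I // φ i ∈ A • S}
          = ∑ i : I, if φ i ∈ A • S then 1 else 0 := by
        intro A
        rw [Nat.card_eq_fintype_card, Fintype.card_subtype, Finset.card_filter]
      have hr : ∀ i : I, Nat.card {A : Γ // φ i ∈ A • S}
          = ∑ A : Γ, if φ i ∈ A • S then 1 else 0 := by
        intro i
        rw [Nat.card_eq_fintype_card, Fintype.card_subtype, Finset.card_filter]
      rw [Finset.sum_congr rfl (fun A _ => hl A), Finset.sum_congr rfl (fun i _ => hr i),
        Finset.sum_comm]
    rw [← Finset.sum_mul, hswap, Finset.sum_mul]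
    have : ∀ i : I, Nat.card {A : Γ // φ i ∈ A • S} * Nat.card X
        = Nat.card S * Nat.card Γ := by
      intro i
      rw [inv_count, smulset_card]
    rw [Finset.sum_congr rfl (fun i _ => this i), Finset.sum_const, Finset.card_univ,
      smul_eq_mul, ← Nat.card_eq_fintype_card (α := I)]
    ring
  have hlt : ∑ A : Γ, Nat.card {i : I // φ i ∈ A • S} * Nat.card X
      < ∑ A : Γ, Nat.card I * Nat.card S := by
    apply Finset.sum_lt_sum_of_nonempty
    · exact Finset.univ_nonempty
    · exact fun A _ => hcon A
  rw [hsum, Finset.sum_const, Finset.card_univ, smul_eq_mul, ← Nat.card_eq_fintype_card (α := Γ),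
    mul_comm (Nat.card Γ) _] at hlt
  exact lt_irrefl _ hlt

end Counting


lemma bil_zero_right (v : Fin k → F) : bil v 0 = 0 := by
  rw [bil_eq_dot, dotProduct_zero]

lemma sum_dite_fin {m : ℕ} (hm : m ≤ k) (G : Fin m → F) :
    ∑ t : Fin k, (if h : (t : ℕ) < m then G ⟨(t : ℕ), h⟩ else 0) = ∑ s : Fin m, G s := by
  calc ∑ t : Fin k, (if h : (t : ℕ) < m then G ⟨(t : ℕ), h⟩ else 0)
      = ∑ t ∈ Finset.range k, (if h : t < m then G ⟨t, h⟩ else 0) :=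
        Fin.sum_univ_eq_sum_range (fun t => if h : t < m then G ⟨t, h⟩ else 0) k
    _ = ∑ t ∈ Finset.range m, (if h : t < m then G ⟨t, h⟩ else 0) := by
        refine (Finset.sum_subset (Finset.range_subset_range.mpr hm) ?_).symm
        intro t _ htm
        rw [Finset.mem_range] at htm
        rw [dif_neg htm]
    _ = ∑ s : Fin m, (if h : ((s : ℕ)) < m then G ⟨(s : ℕ), h⟩ else 0) :=
        (Fin.sum_univ_eq_sum_range (fun t => if h : t < m then G ⟨t, h⟩ else 0) m).symm
    _ = ∑ s : Fin m, G s := Finset.sum_congr rfl (fun s _ => by simp)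

lemma basis_eval {n m : ℕ} {R : Submodule F (Fin n → F)} (bb : Module.Basis (Fin m) F R)
    (x : R) (i : Fin n) :
    ∑ s : Fin m, ((bb s : Fin n → F)) i * bb.repr x s = (x : Fin n → F) i := by
  have h2 : (x : Fin n → F) = ∑ s : Fin m, bb.repr x s • (bb s : Fin n → F) := by
    conv_lhs => rw [← bb.sum_repr x]
    rw [Submodule.coe_sum]
    rfl
  rw [h2, Finset.sum_apply]
  refine Finset.sum_congr rfl fun s _ => ?_
  rw [Pi.smul_apply, smul_eq_mul, mul_comm]

lemma exists_factorization {n : ℕ} (M : Matrix (Fin n) (Fin n) F) (hr : M.rank ≤ k) :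
    ∃ a b : Fin n → Fin k → F, ∀ i j, bil (a i) (b j) = M i j := by
  classical
  set R := LinearMap.range M.mulVecLin with hR
  set m := Module.finrank F R with hm
  have hmk : m ≤ k := hr
  set bb : Module.Basis (Fin m) F R := Module.finBasis F R with hbb
  have hcol : ∀ j, M.mulVec (Pi.single j 1) ∈ R := fun j => ⟨Pi.single j 1, rfl⟩
  refine ⟨fun i t => if h : (t : ℕ) < m then ((bb ⟨(t : ℕ), h⟩ : R) : Fin n → F) i else 0,
          fun j t => if h : (t : ℕ) < m then
            bb.repr ⟨M.mulVec (Pi.single j 1), hcol j⟩ ⟨(t : ℕ), h⟩ else 0, ?_⟩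
  intro i j
  set x : R := ⟨M.mulVec (Pi.single j 1), hcol j⟩ with hx
  have hmain : (∑ t : Fin k,
      (if h : (t : ℕ) < m then ((bb ⟨(t : ℕ), h⟩ : R) : Fin n → F) i else 0) *
      (if h : (t : ℕ) < m then bb.repr x ⟨(t : ℕ), h⟩ else 0)) = (x : Fin n → F) i := by
    rw [← basis_eval bb x i,
      ← sum_dite_fin hmk (fun s : Fin m => ((bb s : Fin n → F)) i * bb.repr x s)]
    refine Finset.sum_congr rfl fun t _ => ?_
    by_cases h : (t : ℕ) < m
    · rw [dif_pos h, dif_pos h, dif_pos h]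
    · rw [dif_neg h, dif_neg h, zero_mul, dif_neg h]
  have hxi : (x : Fin n → F) i = M i j := by
    rw [hx]
    show (M.mulVec (Pi.single j 1)) i = M i j
    rw [mulVec_single]
    exact mul_one _
  show (∑ t : Fin k,
      (if h : (t : ℕ) < m then ((bb ⟨(t : ℕ), h⟩ : R) : Fin n → F) i else 0) *
      (if h : (t : ℕ) < m then bb.repr x ⟨(t : ℕ), h⟩ else 0)) = M i j
  rw [hmain, hxi]

end MR

section NhomLemmas

variable {VL VK : Type*} [Finite VL] (L : VL → VL → Prop) (K : VK → VK → Prop)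

lemma Nhom_bdd : BddAbove {n | ∃ S : Set VL,
    (∃ f : S → VK, ∀ x y : S, L x.val y.val → K (f x) (f y)) ∧ Nat.card S = n} := by
  refine ⟨Nat.card VL, ?_⟩
  rintro m ⟨S, -, hcard⟩
  rw [← hcard]
  exact Nat.card_le_card_of_injective Subtype.val Subtype.val_injective

lemma Nhom_nonempty : (0 : ℕ) ∈ {n | ∃ S : Set VL,
    (∃ f : S → VK, ∀ x y : S, L x.val y.val → K (f x) (f y)) ∧ Nat.card S = n} := by
  refine ⟨∅, ⟨fun x => absurd x.2 (Set.notMem_empty x.val),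
    fun x y _ => absurd x.2 (Set.notMem_empty x.val)⟩, ?_⟩
  simp

lemma Nhom_mem : Nhom L K ∈ {n | ∃ S : Set VL,
    (∃ f : S → VK, ∀ x y : S, L x.val y.val → K (f x) (f y)) ∧ Nat.card S = n} :=
  Nat.sSup_mem ⟨0, Nhom_nonempty L K⟩ (Nhom_bdd L K)

lemma le_Nhom {S : Set VL} (h : ∃ f : S → VK, ∀ x y : S, L x.val y.val → K (f x) (f y)) :
    Nat.card S ≤ Nhom L K :=
  le_csSup (Nhom_bdd L K) ⟨S, h, rfl⟩

end NhomLemmas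

open Pointwise in
/-- Let `q` be a prime power, `k` a positive integer, `G` a finite loopless digraph on
`n` vertices and `K` a finite digraph.  If `|G| / N(Ḡ,K) > |H_k^q| / N(H̄_k^q,K)`
(stated cross-multiplied), then `minrank_q(G) ≥ k + 1`. -/
theorem minrank_ge_of_Nhom_ratio (q k n : ℕ) (hq : IsPrimePow q) (hk : 0 < k)
    (F : Type) [Field F] [Fintype F] (hF : Fintype.card F = q)
    (G : Fin n → Fin n → Prop) (hloopless : ∀ i, ¬ G i i)
    (VK : Type) [Fintype VK] (K : VK → VK → Prop)
    (hineq : Nat.card (HVtx k F) * Nhom (digraphCompl G) K <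
      n * Nhom (digraphCompl (HAdj (k := k) (F := F))) K) :
    k + 1 ≤ minrank F G := by
  classical
  have hne : (1 : Matrix (Fin n) (Fin n) F).rank ∈ {r | ∃ M : Matrix (Fin n) (Fin n) F,
      (∀ i, M i i ≠ 0) ∧ (∀ i j, i ≠ j → ¬ G i j → M i j = 0) ∧ M.rank = r} :=
    ⟨1, fun i => by simp, fun i j hij _ => Matrix.one_apply_ne hij, rfl⟩
  refine le_csInf ⟨_, hne⟩ ?_
  rintro r ⟨M, hdiag, hz, rfl⟩
  by_contra hcon
  push_neg at hcon
  have hrk : M.rank ≤ k := by omega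
  obtain ⟨a, b, hab⟩ := MR.exists_factorization M hrk
  have hane : ∀ i, a i ≠ 0 := by
    intro i h0
    apply hdiag i
    rw [← hab i i, h0, MR.bil_zero_left]
  have hbne : ∀ i, b i ≠ 0 := by
    intro i h0
    apply hdiag i
    rw [← hab i i, h0, MR.bil_zero_right]
  have hφprop : ∀ i : Fin n, IsHVertex ((MR.nrm (a i), MR.nrm (b i))) := by
    intro i
    obtain ⟨c, hc, hceq⟩ := MR.nrm_eq_smul _ (hane i)
    obtain ⟨d, hd, hdeq⟩ := MR.nrm_eq_smul _ (hbne i)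
    refine ⟨MR.nrm_isNormal _ (hane i), MR.nrm_isNormal _ (hbne i), ?_⟩
    show bil (MR.nrm (a i)) (MR.nrm (b i)) ≠ 0
    rw [hceq, hdeq, MR.bil_smul_left, MR.bil_smul_right, hab i i]
    exact mul_ne_zero hc (mul_ne_zero hd (hdiag i))
  set φ : Fin n → HVtx k F := fun i => ⟨(MR.nrm (a i), MR.nrm (b i)), hφprop i⟩ with hφ
  have hbil0 : ∀ i j, M i j = 0 → bil (φ i).val.1 (φ j).val.2 = 0 := by
    intro i j h0
    obtain ⟨c, hc, hceq⟩ := MR.nrm_eq_smul _ (hane i)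
    obtain ⟨d, hd, hdeq⟩ := MR.nrm_eq_smul _ (hbne j)
    show bil (MR.nrm (a i)) (MR.nrm (b j)) = 0
    rw [hceq, hdeq, MR.bil_smul_left, MR.bil_smul_right, hab i j, h0, mul_zero, mul_zero]
  have hhom : ∀ i j : Fin n, digraphCompl G i j → digraphCompl HAdj (φ i) (φ j) := by
    rintro i j ⟨hij, hnG⟩
    have hb0 := hbil0 i j (hz i j hij hnG)
    constructor
    · intro he
      rw [← he] at hb0
      exact (φ i).2.2.2 hb0
    · intro hadj
      exact hadj.2 hb0
  haveI : MulAction.IsPretransitive (MR.GLk k F) (HVtx k F) := MR.pretrans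
  obtain ⟨S, hSf, hScard⟩ := Nhom_mem (digraphCompl (HAdj (k := k) (F := F))) K
  haveI : Nonempty (MR.GLk k F) := ⟨1⟩
  obtain ⟨A, hA⟩ := MR.exists_good_translate (Γ := MR.GLk k F) S φ
  obtain ⟨g, hg⟩ := hSf
  set T : Set (Fin n) := {i | φ i ∈ A • S} with hT
  have hTcard : Nat.card {i : Fin n // φ i ∈ A • S} = Nat.card T := rfl
  have hhomT : ∃ f : T → VK, ∀ x y : T, digraphCompl G x.val y.val → K (f x) (f y) := by
    refine ⟨fun x => g ⟨A⁻¹ • φ x.val, Set.mem_smul_set_iff_inv_smul_mem.mp x.2⟩, ?_⟩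
    intro x y hxy
    exact hg _ _ (MR.dcompl_smul A⁻¹ (hhom _ _ hxy))
  have hleN : Nat.card T ≤ Nhom (digraphCompl G) K :=
    le_Nhom (digraphCompl G) K hhomT
  have h1 : n * Nhom (digraphCompl (HAdj (k := k) (F := F))) K
      ≤ Nat.card T * Nat.card (HVtx k F) := by
    rw [← hScard]
    calc n * Nat.card S = Nat.card (Fin n) * Nat.card S := by
          rw [Nat.card_eq_fintype_card (α := Fin n), Fintype.card_fin]
      _ ≤ Nat.card {i : Fin n // φ i ∈ A • S} * Nat.card (HVtx k F) := hA
      _ = Nat.card T * Nat.card (HVtx k F) := by rw [hTcard]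
  have h2 : Nat.card T * Nat.card (HVtx k F)
      ≤ Nat.card (HVtx k F) * Nhom (digraphCompl G) K := by
    rw [mul_comm]
    exact Nat.mul_le_mul_left _ hleN
  omega
end
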